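/- Let γ be a continuous injective map from the unit circle to ℝ² with image the Jordan curve K. If (γ_n)_{n ∈ ℕ} is a sequence of pairwise disjoint arcs of K (images under γ of nondegenerate closed arcs of the circle), then the diameters of the sets γ_n tend to 0 as n → ∞. -/

import Mathlib

open Real Set Filter

section CircleAux

lemma sphAbs (z : Metric.sphere (0 : ℂ) 1) : ‖(z : ℂ)‖ = 1 := by
  have := mem_sphere_zero_iff_norm.mp z.2
  simpa using this

lemma sphNe (z : Metric.sphere (0 : ℂ) 1) : (z : ℂ) ≠ 0 := by
  intro h
  have := sphAbs z
  rw [h] at this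
  simp at this

/-- Angle coordinate on the circle relative to the point `u`: the argument of `-(z/u)`,
which is continuous away from `u` and injective. -/
noncomputable def circF (u z : Metric.sphere (0 : ℂ) 1) : ℝ :=
  Complex.arg (-((z : ℂ) / (u : ℂ)))

lemma circF_abs (u z : Metric.sphere (0 : ℂ) 1) :
    ‖-((z : ℂ) / (u : ℂ))‖ = 1 := by
  rw [norm_neg, norm_div, sphAbs, sphAbs]
  norm_num

lemma circF_inj (u : Metric.sphere (0 : ℂ) 1) : Function.Injective (circF u) := by
  intro z w h
  have h2 : -((z : ℂ) / (u : ℂ)) = -((w : ℂ) / (u : ℂ)) :=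
    Complex.ext_norm_arg (by rw [circF_abs, circF_abs]) h
  have := sphNe u
  field_simp at h2
  exact Subtype.ext (neg_inj.mp h2)

lemma circF_self (u : Metric.sphere (0 : ℂ) 1) : circF u u = π := by
  unfold circF
  rw [div_self (sphNe u), Complex.arg_neg_one]

lemma circF_mem {u z : Metric.sphere (0 : ℂ) 1} (h : z ≠ u) :
    circF u z ∈ Set.Ioo (-π) π := by
  refine ⟨Complex.neg_pi_lt_arg _, lt_of_le_of_ne (Complex.arg_le_pi _) ?_⟩
  intro hπ
  exact h (circF_inj u (by rw [hπ, circF_self]))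

lemma circF_slit {u z : Metric.sphere (0 : ℂ) 1} (h : z ≠ u) :
    -((z : ℂ) / (u : ℂ)) ∈ Complex.slitPlane := by
  rw [Complex.mem_slitPlane_iff_arg]
  constructor
  · exact ne_of_lt (circF_mem h).2
  · intro h0
    have := circF_abs u z
    rw [h0] at this
    simp at this

lemma circF_continuousAt {u z : Metric.sphere (0 : ℂ) 1} (h : z ≠ u) :
    ContinuousAt (circF u) z := by
  have hc : ContinuousAt (fun w : Metric.sphere (0 : ℂ) 1 => -((w : ℂ) / (u : ℂ))) z :=
    ((continuous_subtype_val.div_const _).neg).continuousAt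
  show ContinuousAt (Complex.arg ∘ fun w : Metric.sphere (0 : ℂ) 1 => -((w : ℂ) / (u : ℂ))) z
  exact ContinuousAt.comp (x := z) (Complex.continuousAt_arg (circF_slit h)) hc

lemma exists_circF_eq (u : Metric.sphere (0 : ℂ) 1) {t : ℝ} (ht : t ∈ Set.Ioo (-π) π) :
    ∃ v : Metric.sphere (0 : ℂ) 1, circF u v = t := by
  refine ⟨⟨-(u : ℂ) * Complex.exp (t * Complex.I), ?_⟩, ?_⟩
  · rw [mem_sphere_zero_iff_norm]
    rw [norm_mul, norm_neg, sphAbs,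
      Complex.norm_exp_ofReal_mul_I, one_mul]
  · unfold circF
    have hu := sphNe u
    have : -((-(u : ℂ) * Complex.exp (t * Complex.I)) / (u : ℂ))
        = Complex.exp (t * Complex.I) := by
      field_simp
    rw [this, Complex.exp_mul_I, Complex.arg_cos_add_sin_mul_I ⟨ht.1, le_of_lt ht.2⟩]

/-- Intermediate value theorem on the circle: a preconnected set avoiding `u`
and containing points on both "sides" of `v` (in the `circF u` coordinate)
must contain `v`. -/
lemma mem_of_arc {C : Set (Metric.sphere (0 : ℂ) 1)} (hC : IsPreconnected C)
    {u v x y : Metric.sphere (0 : ℂ) 1} (hu : u ∉ C)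
    (hx : x ∈ C) (hy : y ∈ C) {t : ℝ} (hv : circF u v = t)
    (h1 : circF u x ≤ t) (h2 : t ≤ circF u y) : v ∈ C := by
  have hcont : ContinuousOn (circF u) C := fun z hz =>
    (circF_continuousAt (fun h : z = u => hu (h ▸ hz))).continuousWithinAt
  obtain ⟨z, hzC, hzt⟩ := hC.intermediate_value hx hy hcont ⟨h1, h2⟩
  have : z = v := circF_inj u (hzt.trans hv.symm)
  exact this ▸ hzC

lemma exists_third (p q : Metric.sphere (0 : ℂ) 1) :
    ∃ u : Metric.sphere (0 : ℂ) 1, u ≠ p ∧ u ≠ q := by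
  have m1 : (1 : ℂ) ∈ Metric.sphere (0 : ℂ) 1 := by
    rw [mem_sphere_zero_iff_norm]; norm_num
  have m2 : (-1 : ℂ) ∈ Metric.sphere (0 : ℂ) 1 := by
    rw [mem_sphere_zero_iff_norm]; norm_num
  have m3 : Complex.I ∈ Metric.sphere (0 : ℂ) 1 := by
    rw [mem_sphere_zero_iff_norm, Complex.norm_I]
  set e1 : Metric.sphere (0 : ℂ) 1 := ⟨1, m1⟩ with he1
  set e2 : Metric.sphere (0 : ℂ) 1 := ⟨-1, m2⟩ with he2
  set e3 : Metric.sphere (0 : ℂ) 1 := ⟨Complex.I, m3⟩ with he3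
  have h12 : e1 ≠ e2 := by
    intro h
    rw [he1, he2, Subtype.mk_eq_mk] at h
    norm_num at h
  have h13 : e1 ≠ e3 := by
    intro h
    rw [he1, he3, Subtype.mk_eq_mk] at h
    have := congrArg Complex.re h
    simp at this
  have h23 : e2 ≠ e3 := by
    intro h
    rw [he2, he3, Subtype.mk_eq_mk] at h
    have := congrArg Complex.re h
    simp at this
  rcases eq_or_ne e1 p with h1p | h1p
  · rcases eq_or_ne e2 q with h2q | h2q
    · exact ⟨e3, h1p ▸ h13.symm, h2q ▸ h23.symm⟩
    · exact ⟨e2, h1p ▸ h12.symm, h2q⟩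
  · rcases eq_or_ne e1 q with h1q | h1q
    · rcases eq_or_ne e2 p with h2p | h2p
      · exact ⟨e3, h2p ▸ h23.symm, h1q ▸ h13.symm⟩
      · exact ⟨e2, h2p, h1q ▸ h12.symm⟩
    · exact ⟨e1, h1p, h1q⟩

end CircleAux

/-- A nondegenerate closed arc of the unit circle: a closed connected subset that
is neither empty, a single point, nor the whole circle. (Connectedness in Mathlib
includes nonemptiness.) -/
def IsCircleArc (C : Set (Metric.sphere (0 : ℂ) 1)) : Prop :=
  IsClosed C ∧ IsConnected C ∧ (∀ z, C ≠ {z}) ∧ C ≠ Set.univ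

/-- The diameters of a sequence of pairwise disjoint arcs of a Jordan curve tend to 0. -/
theorem tendsto_diam_zero_of_disjoint_arcs
    (γ : Metric.sphere (0 : ℂ) 1 → EuclideanSpace ℝ (Fin 2))
    (hcont : Continuous γ) (hinj : Function.Injective γ)
    (K : Set (EuclideanSpace ℝ (Fin 2))) (hK : Set.range γ = K)
    (A : ℕ → Set (EuclideanSpace ℝ (Fin 2)))
    (harc : ∀ n, ∃ C : Set (Metric.sphere (0 : ℂ) 1), IsCircleArc C ∧ A n = γ '' C)
    (hdisj : Pairwise (Function.onFun Disjoint A)) :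
    Filter.Tendsto (fun n => Metric.diam (A n)) Filter.atTop (nhds 0) := by
  rw [Metric.tendsto_atTop]
  by_contra hcon
  push_neg at hcon
  obtain ⟨ε, hε, hfr⟩ := hcon
  have hfr' : ∃ᶠ n in Filter.atTop, ε ≤ Metric.diam (A n) := by
    rw [Filter.frequently_atTop]
    intro N
    obtain ⟨n, hn, h⟩ := hfr N
    refine ⟨n, hn, ?_⟩
    rwa [Real.dist_eq, sub_zero, abs_of_nonneg Metric.diam_nonneg] at h
  obtain ⟨φ0, hφ0, hdiam⟩ := Filter.extraction_of_frequently_atTop hfr'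
  choose C hCarc hCeq using fun k => harc (φ0 k)
  have hpt : ∀ k, ∃ x ∈ C k, ∃ y ∈ C k, ε / 2 < dist (γ x) (γ y) := by
    intro k
    by_contra hk
    push_neg at hk
    have hle : Metric.diam (A (φ0 k)) ≤ ε / 2 := by
      rw [hCeq k]
      apply Metric.diam_le_of_forall_dist_le (by positivity)
      rintro a ⟨x, hxm, rfl⟩ b ⟨y, hym, rfl⟩
      exact hk x hxm y hym
    linarith [hdiam k]
  choose x hx y hy hxy using hpt
  obtain ⟨p, ψ1, hψ1, hp⟩ := CompactSpace.tendsto_subseq x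
  obtain ⟨q, ψ2, hψ2, hq⟩ := CompactSpace.tendsto_subseq (y ∘ ψ1)
  set σ : ℕ → ℕ := ψ1 ∘ ψ2 with hσdef
  have hσ : StrictMono σ := hψ1.comp hψ2
  have hX : Filter.Tendsto (fun k => x (σ k)) Filter.atTop (nhds p) :=
    hp.comp hψ2.tendsto_atTop
  have hY : Filter.Tendsto (fun k => y (σ k)) Filter.atTop (nhds q) := hq
  have hd : Filter.Tendsto (fun k => dist (γ (x (σ k))) (γ (y (σ k)))) Filter.atTop
      (nhds (dist (γ p) (γ q))) :=
    ((hcont.tendsto p).comp hX).dist ((hcont.tendsto q).comp hY)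
  have hpq2 : ε / 2 ≤ dist (γ p) (γ q) :=
    ge_of_tendsto' hd fun k => le_of_lt (hxy (σ k))
  have hne : p ≠ q := by
    intro h
    rw [h, dist_self] at hpq2
    linarith
  -- pick a reference point `u` distinct from `p` and `q`
  obtain ⟨u, hup, huq⟩ := exists_third p q
  have hpu : p ≠ u := hup.symm
  have hqu : q ≠ u := huq.symm
  -- a clash lemma from disjointness
  have hclash : ∀ i j, i < j → ∀ w : Metric.sphere (0 : ℂ) 1,
      w ∈ C (σ i) → w ∈ C (σ j) → False := by
    intro i j hij w hwi hwj
    have hne' : φ0 (σ i) ≠ φ0 (σ j) :=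
      fun h => (Nat.ne_of_lt (hσ hij)) ((hφ0.injective) h)
    have hD : Disjoint (A (φ0 (σ i))) (A (φ0 (σ j))) := hdisj hne'
    exact Set.disjoint_left.mp hD
      (by rw [hCeq]; exact ⟨w, hwi, rfl⟩)
      (by rw [hCeq]; exact ⟨w, hwj, rfl⟩)
  -- the main contradiction argument, symmetric in the two endpoints
  have main : ∀ (p' q' : Metric.sphere (0 : ℂ) 1) (xs ys : ℕ → Metric.sphere (0 : ℂ) 1),
      Filter.Tendsto xs Filter.atTop (nhds p') → Filter.Tendsto ys Filter.atTop (nhds q') →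
      (∀ k, xs k ∈ C (σ k)) → (∀ k, ys k ∈ C (σ k)) →
      p' ≠ u → q' ≠ u → circF u p' < circF u q' → False := by
    intro p' q' xs ys hxs hys hxsm hysm hp'u hq'u hlt
    have hpmem := circF_mem hp'u
    have hqmem := circF_mem hq'u
    set t : ℝ := (circF u p' + circF u q') / 2 with htdef
    have ht : t ∈ Set.Ioo (-π) π := by
      constructor
      · have := hpmem.1; have := hqmem.1; rw [htdef]; linarith
      · have := hpmem.2; have := hqmem.2; rw [htdef]; linarith
    have htp : circF u p' < t := by rw [htdef]; linarith
    have htq : t < circF u q' := by rw [htdef]; linarith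
    obtain ⟨v, hv⟩ := exists_circF_eq u ht
    have hFx : Filter.Tendsto (fun k => circF u (xs k)) Filter.atTop (nhds (circF u p')) :=
      (circF_continuousAt hp'u).tendsto.comp hxs
    have hFy : Filter.Tendsto (fun k => circF u (ys k)) Filter.atTop (nhds (circF u q')) :=
      (circF_continuousAt hq'u).tendsto.comp hys
    have hev : ∀ᶠ k in Filter.atTop, circF u (xs k) < t ∧ t < circF u (ys k) :=
      (hFx.eventually_lt_const htp).and (hFy.eventually_const_lt htq)
    obtain ⟨N, hN⟩ := Filter.eventually_atTop.mp hev
    have key : ∀ k, N ≤ k → u ∈ C (σ k) ∨ v ∈ C (σ k) := by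
      intro k hk
      by_cases hu : u ∈ C (σ k)
      · exact Or.inl hu
      · refine Or.inr (mem_of_arc ((hCarc (σ k)).2.1.isPreconnected) hu (hxsm k) (hysm k) hv
          (le_of_lt (hN k hk).1) (le_of_lt (hN k hk).2))
    rcases key N le_rfl with h0 | h0 <;>
      rcases key (N + 1) (by omega) with h1 | h1 <;>
        rcases key (N + 2) (by omega) with h2 | h2 <;>
          first
          | exact hclash N (N + 1) (by omega) _ h0 h1
          | exact hclash N (N + 2) (by omega) _ h0 h2
          | exact hclash (N + 1) (N + 2) (by omega) _ h1 h2
  have hFne : circF u p ≠ circF u q := fun h => hne (circF_inj u h)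
  rcases lt_or_gt_of_ne hFne with hlt | hlt
  · exact main p q (fun k => x (σ k)) (fun k => y (σ k)) hX hY
      (fun k => hx (σ k)) (fun k => hy (σ k)) hpu hqu hlt
  · exact main q p (fun k => y (σ k)) (fun k => x (σ k)) hY hX
      (fun k => hy (σ k)) (fun k => hx (σ k)) hqu hpu hlt
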